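/- Let G = (V, E, w) be a finite connected weighted graph with positive edge weights w_e. For t ≥ 0, let N(G, t) denote the number of connected components of the subgraph of G obtained by retaining only the edges e with w_e ≤ t. Then the weight W(G) of a minimum spanning tree of G satisfies W(G) = ∫₀^∞ (N(G,t) − 1) dt, and moreover the integrand vanishes for t ≥ max_{e∈E} w_e, so W(G) = ∫₀^{max_e w_e} (N(G,t) − 1) dt. -/

import Mathlib

open MeasureTheory

section Helpers
open SimpleGraph

variable {V : Type*}

lemma myReach_of_adj {H K : SimpleGraph V} (h : ∀ x y : V, K.Adj x y → H.Reachable x y)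
    {u v : V} (hr : K.Reachable u v) : H.Reachable u v := by
  obtain ⟨p⟩ := hr
  induction p with
  | nil => exact Reachable.refl _
  | cons ha p ih => exact (h _ _ ha).trans ih

lemma myReach_sup_edge {H : SimpleGraph V} {a b x y : V}
    (h : (H ⊔ edge a b).Reachable x y) :
    H.Reachable x y ∨ (H.Reachable x a ∧ H.Reachable b y) ∨
      (H.Reachable x b ∧ H.Reachable a y) := by
  obtain ⟨p⟩ := h
  induction p with
  | nil => exact Or.inl (Reachable.refl _)
  | @cons u z w ha p ih =>
    rcases (sup_adj _ _ _ _).1 ha with h' | h'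
    · rcases ih with h1 | ⟨h1, h2⟩ | ⟨h1, h2⟩
      · exact Or.inl (h'.reachable.trans h1)
      · exact Or.inr (Or.inl ⟨h'.reachable.trans h1, h2⟩)
      · exact Or.inr (Or.inr ⟨h'.reachable.trans h1, h2⟩)
    · rw [edge_adj] at h'
      rcases h'.1 with ⟨rfl, rfl⟩ | ⟨rfl, rfl⟩
      · rcases ih with h1 | ⟨h1, h2⟩ | ⟨h1, h2⟩
        · exact Or.inr (Or.inl ⟨Reachable.refl _, h1⟩)
        · exact Or.inr (Or.inl ⟨Reachable.refl _, h2⟩)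
        · exact Or.inl h2
      · rcases ih with h1 | ⟨h1, h2⟩ | ⟨h1, h2⟩
        · exact Or.inr (Or.inr ⟨Reachable.refl _, h1⟩)
        · exact Or.inl h2
        · exact Or.inr (Or.inr ⟨Reachable.refl _, h2⟩)

lemma myCard_cc_sup_edge [Finite V] {H : SimpleGraph V} {a b : V} (hab : a ≠ b)
    (hnr : ¬H.Reachable a b) :
    Nat.card H.ConnectedComponent = Nat.card (H ⊔ edge a b).ConnectedComponent + 1 := by
  classical
  set K := H ⊔ edge a b with hK
  have hKadj : K.Adj a b := by
    rw [hK, sup_adj, edge_adj]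
    exact Or.inr ⟨Or.inl ⟨rfl, rfl⟩, hab⟩
  let f : H.ConnectedComponent → K.ConnectedComponent :=
    ConnectedComponent.map (Hom.ofLE le_sup_left)
  have e : {c : H.ConnectedComponent // c ≠ H.connectedComponentMk b} ≃ K.ConnectedComponent := by
    refine Equiv.ofBijective (fun c => f c.1) ⟨?_, ?_⟩
    · rintro ⟨c1, h1⟩ ⟨c2, h2⟩ h
      obtain ⟨x, rfl⟩ := c1.exists_rep
      obtain ⟨y, rfl⟩ := c2.exists_rep
      have hr : K.Reachable x y := ConnectedComponent.exact h
      apply Subtype.ext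
      rcases myReach_sup_edge hr with h' | ⟨h1', h2'⟩ | ⟨h1', h2'⟩
      · exact ConnectedComponent.sound h'
      · exact absurd (ConnectedComponent.sound h2'.symm) h2
      · exact absurd (ConnectedComponent.sound h1') h1
    · intro d
      obtain ⟨z, rfl⟩ := d.exists_rep
      by_cases hz : H.connectedComponentMk z = H.connectedComponentMk b
      · refine ⟨⟨H.connectedComponentMk a, fun h => hnr (ConnectedComponent.exact h)⟩, ?_⟩
        exact ConnectedComponent.sound
          (hKadj.reachable.trans ((ConnectedComponent.exact hz.symm).mono le_sup_left))
      · exact ⟨⟨H.connectedComponentMk z, hz⟩, rfl⟩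
  have e2 : H.ConnectedComponent ≃ Option K.ConnectedComponent :=
    ((Equiv.optionSubtypeNe (H.connectedComponentMk b)).symm).trans (Equiv.optionCongr e)
  haveI : Fintype K.ConnectedComponent := Fintype.ofFinite _
  rw [Nat.card_congr e2, Nat.card_eq_fintype_card, Nat.card_eq_fintype_card,
    Fintype.card_option]

lemma myCard_cc_bot [Finite V] : Nat.card (⊥ : SimpleGraph V).ConnectedComponent = Nat.card V := by
  refine (Nat.card_congr (Equiv.ofBijective
    (fun v => (⊥ : SimpleGraph V).connectedComponentMk v) ⟨?_, ?_⟩)).symm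
  · intro x y h
    exact reachable_bot.1 (ConnectedComponent.exact h)
  · intro c
    obtain ⟨v, rfl⟩ := c.exists_rep
    exact ⟨v, rfl⟩

lemma myForest_count [Fintype V] {T : SimpleGraph V} (hT : T.IsAcyclic)
    (S : Finset (Sym2 V)) :
    ↑S ⊆ T.edgeSet →
      Nat.card (fromEdgeSet (S : Set (Sym2 V))).ConnectedComponent + S.card = Fintype.card V := by
  classical
  induction S using Finset.induction_on with
  | empty =>
    intro _
    rw [Finset.card_empty, add_zero, Finset.coe_empty, fromEdgeSet_empty, myCard_cc_bot,
      Nat.card_eq_fintype_card]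
  | @insert e S he ih =>
    revert he
    induction e using Sym2.ind with
    | _ a b =>
      intro he hsub
      have heT : s(a, b) ∈ T.edgeSet := hsub (by simp)
      have hadj : T.Adj a b := T.mem_edgeSet.1 heT
      have hab : a ≠ b := hadj.ne
      have hS : ↑S ⊆ T.edgeSet := fun x hx => hsub (by simp [hx])
      have hle : fromEdgeSet (S : Set (Sym2 V)) ≤ T \ fromEdgeSet {s(a, b)} := by
        intro x y hxy
        rw [fromEdgeSet_adj] at hxy
        rw [sdiff_adj]
        refine ⟨T.mem_edgeSet.1 (hS hxy.1), ?_⟩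
        rw [fromEdgeSet_adj]
        rintro ⟨hmem, -⟩
        rw [Set.mem_singleton_iff] at hmem
        exact he (hmem ▸ hxy.1)
      have hbr : T.IsBridge s(a, b) := (isAcyclic_iff_forall_edge_isBridge.1 hT) heT
      have hnr : ¬(fromEdgeSet (S : Set (Sym2 V))).Reachable a b := by
        intro h
        exact (isBridge_iff.1 hbr) (h.mono hle)
      have hfrom : fromEdgeSet ((insert s(a, b) S : Finset (Sym2 V)) : Set (Sym2 V)) =
          fromEdgeSet (S : Set (Sym2 V)) ⊔ edge a b := by
        rw [Finset.coe_insert, Set.insert_eq, Set.union_comm, fromEdgeSet_union]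
        rfl
      rw [hfrom, Finset.card_insert_of_notMem he]
      have := myCard_cc_sup_edge (H := fromEdgeSet (S : Set (Sym2 V))) hab hnr
      have h2 := ih hS
      omega

lemma myCard_cc_eq {H K : SimpleGraph V} (hHK : H ≤ K)
    (h : ∀ x y : V, K.Reachable x y → H.Reachable x y) :
    Nat.card H.ConnectedComponent = Nat.card K.ConnectedComponent := by
  refine Nat.card_congr (Equiv.ofBijective
    (ConnectedComponent.map (Hom.ofLE hHK)) ⟨?_, ?_⟩)
  · intro c1 c2 hc
    obtain ⟨x, rfl⟩ := c1.exists_rep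
    obtain ⟨y, rfl⟩ := c2.exists_rep
    exact ConnectedComponent.sound (h x y (ConnectedComponent.exact hc))
  · intro d
    obtain ⟨z, rfl⟩ := d.exists_rep
    exact ⟨H.connectedComponentMk z, rfl⟩

lemma myExchange [Fintype V] [Nonempty V] {G : SimpleGraph V}
    (w : Sym2 V → ℝ) {W : ℝ}
    (hW : IsLeast {x : ℝ | ∃ T' : SimpleGraph V, T' ≤ G ∧ T'.IsTree ∧
      x = ∑ᶠ e ∈ T'.edgeSet, w e} W)
    {T : SimpleGraph V} (hTG : T ≤ G) (hT : T.IsTree) (hWT : W = ∑ᶠ e ∈ T.edgeSet, w e)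
    (t : ℝ) {u v : V} (huv : G.Adj u v) (hwt : w s(u, v) ≤ t) :
    (fromEdgeSet {e | e ∈ T.edgeSet ∧ w e ≤ t}).Reachable u v := by
  classical
  by_contra hnr
  set Ht := fromEdgeSet {e | e ∈ T.edgeSet ∧ w e ≤ t} with hHt
  have hune : u ≠ v := huv.ne
  have huvT : s(u, v) ∉ T.edgeSet := by
    intro h
    exact hnr (Adj.reachable (by rw [hHt, fromEdgeSet_adj]; exact ⟨⟨h, hwt⟩, hune⟩))
  obtain ⟨p₀⟩ := hT.isConnected.preconnected u v
  set p : T.Path u v := p₀.toPath with hp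
  have hft : ∃ f ∈ (p : T.Walk u v).edges, t < w f := by
    by_contra hcon
    push_neg at hcon
    refine hnr ⟨(p : T.Walk u v).transfer Ht fun e he => ?_⟩
    rw [hHt, edgeSet_fromEdgeSet]
    refine ⟨⟨(p : T.Walk u v).edges_subset_edgeSet he, hcon e he⟩, ?_⟩
    exact T.not_isDiag_of_mem_edgeSet ((p : T.Walk u v).edges_subset_edgeSet he)
  obtain ⟨f, hfp, hfw⟩ := hft
  revert hfp hfw
  induction f using Sym2.ind with
  | _ a b =>
  intro hfp hfw
  have hfT : s(a, b) ∈ T.edgeSet := (p : T.Walk u v).edges_subset_edgeSet hfp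
  have hTab : T.Adj a b := T.mem_edgeSet.1 hfT
  have hab : a ≠ b := hTab.ne
  set D := T \ fromEdgeSet {s(a, b)} with hD
  have hDle : D ≤ T := sdiff_le
  have hfD : s(a, b) ∉ D.edgeSet := by
    rw [hD, edgeSet_sdiff, edgeSet_fromEdgeSet]
    intro h
    exact h.2 ⟨Set.mem_singleton _, fun hd => hab (Sym2.mk_isDiag_iff.1 hd)⟩
  have hDuv : ¬D.Reachable u v := by
    rintro ⟨q⟩
    have hqe : ∀ e ∈ q.edges, e ∈ T.edgeSet := fun e he =>
      edgeSet_mono hDle (q.edges_subset_edgeSet he)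
    set q' : T.Walk u v := q.transfer T hqe with hq'
    have hq'e : s(a, b) ∉ q'.edges := by
      rw [hq', Walk.edges_transfer]
      intro hmem
      exact hfD (q.edges_subset_edgeSet hmem)
    have hpq : p = q'.toPath := hT.2.path_unique p q'.toPath
    exact hq'e (Walk.edges_toPath_subset q' (hpq ▸ hfp))
  have hDab : ¬D.Reachable a b :=
    (isBridge_iff.1 ((isAcyclic_iff_forall_edge_isBridge.1 hT.2) hfT))
  have hedgeT : edge a b ≤ T := by
    intro x y hxy
    rw [edge_adj] at hxy
    rcases hxy.1 with ⟨rfl, rfl⟩ | ⟨rfl, rfl⟩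
    · exact hTab
    · exact hTab.symm
  have hTD : T = D ⊔ edge a b := (sdiff_sup_cancel hedgeT).symm
  have hcomp : ∀ x : V, D.Reachable x a ∨ D.Reachable x b := by
    intro x
    have hx := hT.isConnected.preconnected x a
    rw [hTD] at hx
    rcases myReach_sup_edge hx with h1 | ⟨h1, h2⟩ | ⟨h1, h2⟩
    · exact Or.inl h1
    · exact Or.inl h1
    · exact Or.inr h1
  have hua_or : (D.Reachable a u ∨ D.Reachable a v) ∧ (D.Reachable b u ∨ D.Reachable b v) := by
    rcases hcomp u with h1 | h1 <;> rcases hcomp v with h2 | h2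
    · exact absurd (h1.trans h2.symm) hDuv
    · exact ⟨Or.inl h1.symm, Or.inr h2.symm⟩
    · exact ⟨Or.inr h2.symm, Or.inl h1.symm⟩
    · exact absurd (h1.trans h2.symm) hDuv
  set T' := D ⊔ edge u v with hT'
  have hT'adj : T'.Adj u v := by
    rw [hT', sup_adj, edge_adj]
    exact Or.inr ⟨Or.inl ⟨rfl, rfl⟩, hune⟩
  have hDleT' : D ≤ T' := le_sup_left
  have hreach : ∀ z : V, T'.Reachable z u := by
    have hau : T'.Reachable a u := by
      rcases hua_or.1 with h | h
      · exact h.mono hDleT'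
      · exact (h.mono hDleT').trans hT'adj.symm.reachable
    have hbu : T'.Reachable b u := by
      rcases hua_or.2 with h | h
      · exact h.mono hDleT'
      · exact (h.mono hDleT').trans hT'adj.symm.reachable
    intro z
    rcases hcomp z with hz | hz
    · exact (hz.mono hDleT').trans hau
    · exact (hz.mono hDleT').trans hbu
  have hT'conn : T'.Connected := by
    rw [connected_iff]
    exact ⟨fun x y => (hreach x).trans (hreach y).symm, ‹Nonempty V›⟩
  have hT'acyc : T'.IsAcyclic := by
    intro z c hc
    by_cases hmem : s(u, v) ∈ c.edges
    · have hr := (adj_and_reachable_delete_edges_iff_exists_cycle.2 ⟨z, c, hc, hmem⟩).2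
      refine hDuv (hr.mono ?_)
      intro x y hxy
      rw [deleteEdges, sdiff_adj] at hxy
      rcases (sup_adj _ _ _ _).1 hxy.1 with h | h
      · exact h
      · exact absurd h hxy.2
    · have hsub : ∀ e ∈ c.edges, e ∈ T.edgeSet := by
        intro e he
        have hmem' : e ∈ T'.edgeSet := c.edges_subset_edgeSet he
        rw [hT', edgeSet_sup] at hmem'
        rcases hmem' with h | h
        · exact edgeSet_mono hDle h
        · rw [edge_edgeSet_of_ne hune] at h
          exact absurd (h ▸ he) hmem
      exact hT.2 (c.transfer T hsub) (hc.transfer hsub)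
  have hT'G : T' ≤ G := by
    refine sup_le (hDle.trans hTG) ?_
    intro x y hxy
    rw [edge_adj] at hxy
    rcases hxy.1 with ⟨rfl, rfl⟩ | ⟨rfl, rfl⟩
    · exact huv
    · exact huv.symm
  -- weight computation
  have hDedge : D.edgeSet = T.edgeSet \ {s(a, b)} := by
    rw [hD, edgeSet_sdiff, edgeSet_fromEdgeSet]
    ext e
    simp only [Set.mem_diff, Set.mem_singleton_iff, Set.mem_setOf_eq]
    constructor
    · rintro ⟨h1, h2⟩
      exact ⟨h1, fun hh => h2 ⟨hh, fun hd => T.not_isDiag_of_mem_edgeSet h1 hd⟩⟩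
    · rintro ⟨h1, h2⟩
      exact ⟨h1, fun hh => h2 hh.1⟩
  have hT'edge : T'.edgeSet = (T.edgeSet \ {s(a, b)}) ∪ {s(u, v)} := by
    rw [hT', edgeSet_sup, edge_edgeSet_of_ne hune, hDedge]
  -- sums
  have hfin1 : (T.edgeSet \ {s(a, b)}).Finite := Set.toFinite _
  have hsum1 : ∑ᶠ e ∈ T'.edgeSet, w e
      = (∑ᶠ e ∈ T.edgeSet \ {s(a, b)}, w e) + w s(u, v) := by
    rw [hT'edge, finsum_mem_union (by simp [huvT]) hfin1 (Set.finite_singleton _),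
      finsum_mem_singleton]
  have hsum2 : ∑ᶠ e ∈ T.edgeSet, w e
      = (∑ᶠ e ∈ T.edgeSet \ {s(a, b)}, w e) + w s(a, b) := by
    conv_lhs => rw [← Set.diff_union_of_subset (Set.singleton_subset_iff.2 hfT)]
    rw [finsum_mem_union (by simp) hfin1 (Set.finite_singleton _), finsum_mem_singleton]
  have hWle : W ≤ ∑ᶠ e ∈ T'.edgeSet, w e :=
    hW.2 ⟨T', hT'G, ⟨hT'conn, hT'acyc⟩, rfl⟩
  rw [hsum1] at hWle
  rw [hWT, hsum2] at hWle
  linarith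

lemma myN_eq [Fintype V] [Nonempty V] {G : SimpleGraph V}
    (w : Sym2 V → ℝ) {W : ℝ}
    (hW : IsLeast {x : ℝ | ∃ T' : SimpleGraph V, T' ≤ G ∧ T'.IsTree ∧
      x = ∑ᶠ e ∈ T'.edgeSet, w e} W)
    {T : SimpleGraph V} (hTG : T ≤ G) (hT : T.IsTree) (hWT : W = ∑ᶠ e ∈ T.edgeSet, w e)
    (t : ℝ) :
    Nat.card (fromEdgeSet {e | e ∈ G.edgeSet ∧ w e ≤ t}).ConnectedComponent =
      Nat.card (fromEdgeSet {e | e ∈ T.edgeSet ∧ w e ≤ t}).ConnectedComponent := by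
  refine (myCard_cc_eq (fromEdgeSet_mono ?_) fun x y hr => ?_).symm
  · exact fun e he => ⟨edgeSet_mono hTG he.1, he.2⟩
  · refine myReach_of_adj (fun x' y' ha => ?_) hr
    rw [fromEdgeSet_adj] at ha
    exact myExchange w hW hTG hT hWT t (G.mem_edgeSet.1 ha.1.1) ha.1.2

open MeasureTheory in
lemma myIntegral {ι : Type*} (s : Finset ι) (w : ι → ℝ) (A : Set ℝ)
    (hpos : ∀ e ∈ s, 0 ≤ w e)
    (h : ∀ e ∈ s, Set.Iio (w e) ∩ A = Set.Ioo 0 (w e)) :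
    ∫ t in A, (∑ e ∈ s, (Set.Iio (w e)).indicator (fun _ => (1:ℝ)) t) = ∑ e ∈ s, w e := by
  rw [integral_finset_sum]
  · refine Finset.sum_congr rfl fun e he => ?_
    rw [MeasureTheory.integral_indicator_const (1 : ℝ) measurableSet_Iio,
      measureReal_restrict_apply measurableSet_Iio, h e he, Real.volume_real_Ioo_of_le (hpos e he),
      sub_zero, smul_eq_mul, mul_one]
  · intro e he
    rw [integrable_indicator_iff measurableSet_Iio]
    refine integrableOn_const ?_ (by simp)
    rw [Measure.restrict_apply measurableSet_Iio, h e he, Real.volume_Ioo]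
    exact ENNReal.ofReal_ne_top

end Helpers

open SimpleGraph


/-- For a finite connected weighted graph `G` with positive edge weights `w`,
the weight `W` of a minimum spanning tree equals `∫₀^∞ (N(G,t) − 1) dt`, where `N(G,t)` is the
number of connected components of the subgraph retaining only edges of weight `≤ t`; moreover the
integrand vanishes for `t ≥ max_e w_e`, so the integral may be taken over `(0, max_e w_e]`. -/
theorem stmt_0 {V : Type*} [Fintype V] [Nonempty V]
    (G : SimpleGraph V) (hG : G.Connected)
    (w : Sym2 V → ℝ) (hw : ∀ e ∈ G.edgeSet, 0 < w e)
    (W : ℝ)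
    (hW : IsLeast {x : ℝ | ∃ T : SimpleGraph V, T ≤ G ∧ T.IsTree ∧
      x = ∑ᶠ e ∈ T.edgeSet, w e} W)
    (N : ℝ → ℕ)
    (hN : ∀ t : ℝ, N t = Nat.card
      (SimpleGraph.ConnectedComponent
        (SimpleGraph.fromEdgeSet {e : Sym2 V | e ∈ G.edgeSet ∧ w e ≤ t}))) :
    (∀ t : ℝ, sSup (w '' G.edgeSet) ≤ t → (N t : ℝ) - 1 = 0) ∧
    W = ∫ t in Set.Ioi (0:ℝ), ((N t : ℝ) - 1) ∧
    W = ∫ t in Set.Ioc (0:ℝ) (sSup (w '' G.edgeSet)), ((N t : ℝ) - 1) := by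
  classical
  obtain ⟨T, hTG, hT, hWT⟩ := hW.1
  letI : Fintype T.edgeSet := (Set.toFinite T.edgeSet).fintype
  set ET := T.edgeFinset with hET
  have hETcoe : (ET : Set (Sym2 V)) = T.edgeSet := T.coe_edgeFinset
  have hcardV : ET.card + 1 = Fintype.card V := hT.card_edgeFinset
  have hETT : ∀ e ∈ ET, e ∈ T.edgeSet := fun e he => by
    rw [← hETcoe]; exact he
  have hETG : ∀ e ∈ ET, e ∈ G.edgeSet := fun e he => edgeSet_mono hTG (hETT e he)
  have hETpos : ∀ e ∈ ET, 0 < w e := fun e he => hw e (hETG e he)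
  set M := sSup (w '' G.edgeSet) with hM
  have hbdd : BddAbove (w '' G.edgeSet) := ((Set.toFinite G.edgeSet).image w).bddAbove
  have hETM : ∀ e ∈ ET, w e ≤ M := fun e he =>
    le_csSup hbdd (Set.mem_image_of_mem w (hETG e he))
  have hNt : ∀ t : ℝ, (N t : ℝ) - 1
      = ∑ e ∈ ET, (Set.Iio (w e)).indicator (fun _ => (1:ℝ)) t := by
    intro t
    set St := ET.filter (fun e => w e ≤ t) with hSt
    have hsub : ↑St ⊆ T.edgeSet := by
      rw [← hETcoe]
      exact Finset.coe_subset.2 (Finset.filter_subset _ _)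
    have hcount := myForest_count hT.2 St hsub
    have hfe : fromEdgeSet (St : Set (Sym2 V)) = fromEdgeSet {e | e ∈ T.edgeSet ∧ w e ≤ t} := by
      congr 1
      ext e
      simp only [hSt, Finset.coe_filter, Set.mem_setOf_eq, Finset.mem_coe]
      constructor
      · rintro ⟨h1, h2⟩; exact ⟨hETT e h1, h2⟩
      · rintro ⟨h1, h2⟩; exact ⟨by rw [hET, mem_edgeFinset]; exact h1, h2⟩
    rw [hfe] at hcount
    have hNeq : N t + St.card = Fintype.card V := by
      rw [hN t, myN_eq w hW hTG hT hWT t]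
      exact hcount
    have hRHS : ∑ e ∈ ET, (Set.Iio (w e)).indicator (fun _ => (1:ℝ)) t
        = ((ET.filter (fun e => ¬ w e ≤ t)).card : ℝ) := by
      rw [Finset.card_filter]
      push_cast
      refine Finset.sum_congr rfl fun e he => ?_
      rw [Set.indicator_apply]
      simp only [Set.mem_Iio]
      by_cases hc : w e ≤ t
      · rw [if_neg (not_lt.2 hc), if_neg (fun h => h hc)]
      · rw [if_pos (not_le.1 hc), if_pos hc]
    have hcards : St.card + (ET.filter (fun e => ¬ w e ≤ t)).card = ET.card :=
      Finset.card_filter_add_card_filter_not _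
    rw [hRHS]
    have hnat : N t = (ET.filter (fun e => ¬ w e ≤ t)).card + 1 := by omega
    rw [hnat]
    push_cast
    ring
  have hWsum : W = ∑ e ∈ ET, w e := by
    rw [hWT, ← hETcoe, finsum_mem_coe_finset]
  refine ⟨?_, ?_, ?_⟩
  · intro t ht
    have hset : {e : Sym2 V | e ∈ G.edgeSet ∧ w e ≤ t} = G.edgeSet := by
      ext e
      simp only [Set.mem_setOf_eq]
      exact ⟨fun h => h.1,
        fun h => ⟨h, le_trans (le_csSup hbdd (Set.mem_image_of_mem w h)) ht⟩⟩
    have h1 : N t = 1 := by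
      rw [hN t, hset, fromEdgeSet_edgeSet]
      rw [Nat.card_eq_one_iff_unique]
      exact ⟨hG.preconnected.subsingleton_connectedComponent,
        ⟨G.connectedComponentMk (Classical.arbitrary V)⟩⟩
    rw [h1]
    norm_num
  · simp only [hNt]
    rw [hWsum]
    refine (myIntegral ET w (Set.Ioi 0) (fun e he => (hETpos e he).le) fun e he => ?_).symm
    rw [Set.Iio_inter_Ioi]
  · simp only [hNt]
    rw [hWsum]
    refine (myIntegral ET w (Set.Ioc 0 M) (fun e he => (hETpos e he).le) fun e he => ?_).symm
    ext x
    simp only [Set.mem_inter_iff, Set.mem_Iio, Set.mem_Ioc, Set.mem_Ioo]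
    constructor
    · rintro ⟨h1, h2, h3⟩; exact ⟨h2, h1⟩
    · rintro ⟨h1, h2⟩; exact ⟨h2, h1, (h2.trans_le (hETM e he)).le⟩
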